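/- arXiv:1707.07136 — 5 statements merged into one kernel-verified Lean document; each statement's English description precedes it below -/
import Mathlib

section
/- Let μ = (μ_1,…,μ_n) and λ = (λ_1,…,λ_n) be partitions (weakly decreasing tuples of nonnegative integers) with μ_i ≤ λ_i for all i. Set ν_i = λ_i − μ_i, h̊_{ij}(μ) = (μ_i − i) − (μ_j − j). Then the product ∏_{i<j} (h̊_{ij}(μ) − ν_j)^{↑(ν_i+1)} / (h̊_{ij}(μ))^{↑(ν_i+1)} (taken over 1 ≤ i < j ≤ n, with each denominator factor a positive integer) equals zero if and only if there exist indices i < j with (μ_i − i) − (λ_j − j) ≤ 0. -/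
/-- for partitions `μ ⊆ λ` of length `n`, with `ν = λ − μ` and
`h̊_{ij}(μ) = (μ_i − i) − (μ_j − j)`, the product
`∏_{i<j} (h̊_{ij}(μ) − ν_j)^{↑(ν_i+1)} / (h̊_{ij}(μ))^{↑(ν_i+1)}` vanishes iff
there are `i < j` with `(μ_i − i) − (λ_j − j) ≤ 0`. -/
theorem norm_product_eq_zero_iff (n : ℕ) (μ lam : Fin n → ℕ)
    (hμ : ∀ i j : Fin n, i ≤ j → μ j ≤ μ i)
    (hlam : ∀ i j : Fin n, i ≤ j → lam j ≤ lam i)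
    (hsub : ∀ i, μ i ≤ lam i)
    (ν : Fin n → ℕ) (hν : ∀ i, (ν i : ℤ) = (lam i : ℤ) - (μ i : ℤ))
    (hh : Fin n → Fin n → ℤ)
    (hhdef : ∀ i j, hh i j = ((μ i : ℤ) - ((i : ℕ) + 1)) - ((μ j : ℤ) - ((j : ℕ) + 1))) :
    (∏ p ∈ Finset.univ.filter (fun p : Fin n × Fin n => p.1 < p.2),
        (∏ k ∈ Finset.range (ν p.1 + 1), ((hh p.1 p.2 : ℚ) - (ν p.2 : ℚ) + (k : ℚ))) /
        (∏ k ∈ Finset.range (ν p.1 + 1), ((hh p.1 p.2 : ℚ) + (k : ℚ)))) = 0 ↔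
    ∃ i j : Fin n, i < j ∧
      ((μ i : ℤ) - ((i : ℕ) + 1)) - ((lam j : ℤ) - ((j : ℕ) + 1)) ≤ 0 := by
  have hden : ∀ i j : Fin n, i < j → ∀ k : ℕ, ((hh i j : ℚ) + (k : ℚ)) ≠ 0 := by
    intro i j hij k
    have h1 : (0 : ℤ) < hh i j + k := by
      rw [hhdef]
      have h2 : μ j ≤ μ i := hμ i j hij.le
      have h3 : (i : ℕ) < (j : ℕ) := hij
      omega
    have h4 : ((hh i j + (k : ℤ) : ℤ) : ℚ) ≠ 0 := by exact_mod_cast h1.ne'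
    push_cast at h4
    exact h4
  constructor
  · intro h
    rw [Finset.prod_eq_zero_iff] at h
    obtain ⟨p, hp, hp0⟩ := h
    rw [Finset.mem_filter] at hp
    have hij := hp.2
    refine ⟨p.1, p.2, hij, ?_⟩
    rw [div_eq_zero_iff] at hp0
    rcases hp0 with h0 | h0
    · rw [Finset.prod_eq_zero_iff] at h0
      obtain ⟨k, hk, hk0⟩ := h0
      rw [Finset.mem_range] at hk
      have h5 : (hh p.1 p.2 : ℤ) - (ν p.2 : ℤ) + (k : ℤ) = 0 := by
        have : (((hh p.1 p.2 : ℤ) - (ν p.2 : ℤ) + (k : ℤ) : ℤ) : ℚ) = 0 := by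
          push_cast; linarith [hk0]
        exact_mod_cast this
      rw [hhdef] at h5
      have h6 := hν p.2
      omega
    · exfalso
      rw [Finset.prod_eq_zero_iff] at h0
      obtain ⟨k, hk, hk0⟩ := h0
      exact hden p.1 p.2 hij k hk0
  · rintro ⟨i, j, hij, hD⟩
    rw [Finset.prod_eq_zero_iff]
    refine ⟨(i, j), Finset.mem_filter.2 ⟨Finset.mem_univ _, hij⟩, ?_⟩
    rw [div_eq_zero_iff]
    left
    rw [Finset.prod_eq_zero_iff]
    have hbound : -((ν i : ℤ)) ≤ ((μ i : ℤ) - ((i : ℕ) + 1)) - ((lam j : ℤ) - ((j : ℕ) + 1)) := by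
      have h2 : lam j ≤ lam i := hlam i j hij.le
      have h3 : (i : ℕ) < (j : ℕ) := hij
      have h4 := hν i
      omega
    set D : ℤ := ((μ i : ℤ) - ((i : ℕ) + 1)) - ((lam j : ℤ) - ((j : ℕ) + 1)) with hDdef
    refine ⟨(-D).toNat, Finset.mem_range.2 ?_, ?_⟩
    · show (-D).toNat < ν i + 1
      omega
    · show (hh i j : ℚ) - (ν j : ℚ) + (((-D).toNat : ℕ) : ℚ) = 0
      have h5 : (hh i j : ℤ) - (ν j : ℤ) = D := by
        rw [hhdef]
        have := hν j
        omega
      have h6 : (hh i j : ℤ) - (ν j : ℤ) + ((-D).toNat : ℤ) = 0 := by omega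
      have h7 : (((hh i j : ℤ) - (ν j : ℤ) + ((-D).toNat : ℤ) : ℤ) : ℚ) = 0 := by
        exact_mod_cast h6
      push_cast at h7
      linarith [h7]
end

section
/- (Pieri rule, combinatorial form) Let μ be a partition of length n and m a nonnegative integer. For a partition λ of length n with μ ⊆ λ and |λ| = |μ| + m, the product ∏_{i<j} (h̊_{ij}(μ) − ν_j)^{↑(ν_i+1)} / (h̊_{ij}(μ))^{↑(ν_i+1)} (with ν = λ − μ) is nonzero if and only if λ∖μ is a horizontal strip, i.e. λ_{i+1} ≤ μ_i for all i. -/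
/-- Pieri rule, combinatorial form: for partitions `μ ⊆ λ` of length
`n` with `|λ| = |μ| + m` and `ν = λ − μ`, the product
`∏_{i<j} (h̊_{ij}(μ) − ν_j)^{↑(ν_i+1)} / (h̊_{ij}(μ))^{↑(ν_i+1)}` is nonzero iff
`λ∖μ` is a horizontal strip, i.e. `λ_{i+1} ≤ μ_i` for all `i`. -/
theorem pieri_product_ne_zero_iff_horizontal_strip (n m : ℕ) (μ lam : Fin n → ℕ)
    (hμ : ∀ i j : Fin n, i ≤ j → μ j ≤ μ i)
    (hlam : ∀ i j : Fin n, i ≤ j → lam j ≤ lam i)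
    (hsub : ∀ i, μ i ≤ lam i)
    (hsum : (∑ i, lam i) = (∑ i, μ i) + m)
    (ν : Fin n → ℕ) (hν : ∀ i, (ν i : ℤ) = (lam i : ℤ) - (μ i : ℤ))
    (hh : Fin n → Fin n → ℤ)
    (hhdef : ∀ i j, hh i j = ((μ i : ℤ) - ((i : ℕ) + 1)) - ((μ j : ℤ) - ((j : ℕ) + 1))) :
    (∏ p ∈ Finset.univ.filter (fun p : Fin n × Fin n => p.1 < p.2),
        (∏ k ∈ Finset.range (ν p.1 + 1), ((hh p.1 p.2 : ℚ) - (ν p.2 : ℚ) + (k : ℚ))) /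
        (∏ k ∈ Finset.range (ν p.1 + 1), ((hh p.1 p.2 : ℚ) + (k : ℚ)))) ≠ 0 ↔
    (∀ i j : Fin n, (j : ℕ) = (i : ℕ) + 1 → lam j ≤ μ i) := by
  have hden : ∀ i j : Fin n, i < j → ∀ k : ℕ, (0 : ℚ) < (hh i j : ℚ) + (k : ℚ) := by
    intro i j hij k
    have hij' : (i : ℕ) < (j : ℕ) := hij
    have hμij := hμ i j hij.le
    have h1 : (1 : ℤ) ≤ hh i j := by rw [hhdef i j]; omega
    have h1q : (1 : ℚ) ≤ (hh i j : ℚ) := by exact_mod_cast h1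
    have hk : (0 : ℚ) ≤ (k : ℚ) := Nat.cast_nonneg k
    linarith
  rw [Finset.prod_ne_zero_iff]
  constructor
  · intro H i j hji
    by_contra hcon
    have hij : i < j := by
      have : (i : ℕ) < (j : ℕ) := by omega
      exact this
    have hmem : (i, j) ∈ Finset.univ.filter (fun p : Fin n × Fin n => p.1 < p.2) := by
      simp [hij]
    have hterm := H (i, j) hmem
    have hlamij := hlam i j hij.le
    apply hterm
    apply div_eq_zero_iff.mpr
    left
    apply Finset.prod_eq_zero (i := lam j - μ i - 1)
    · have hνi := hν i
      have hsubi := hsub i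
      simp only [Finset.mem_range]
      omega
    · have hz : hh i j - (ν j : ℤ) + ((lam j - μ i - 1 : ℕ) : ℤ) = 0 := by
        have := hhdef i j
        have := hν j
        omega
      have : ((hh i j : ℤ) : ℚ) - ((ν j : ℕ) : ℚ) + (((lam j - μ i - 1 : ℕ) : ℕ) : ℚ) = 0 := by
        exact_mod_cast congrArg (fun z : ℤ => (z : ℚ)) hz
      simpa using this
  · intro H p hp
    have hij : p.1 < p.2 := (Finset.mem_filter.mp hp).2
    obtain ⟨i, j⟩ := p
    simp only at hij ⊢
    have hij' : (i : ℕ) < (j : ℕ) := hij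
    have hlt : (i : ℕ) + 1 < n := lt_of_le_of_lt hij' j.isLt
    set i' : Fin n := ⟨(i : ℕ) + 1, hlt⟩ with hi'
    have hstrip : lam j ≤ μ i := by
      have h1 : lam j ≤ lam i' := hlam i' j (by
        show (i' : ℕ) ≤ (j : ℕ); simp [hi']; omega)
      have h2 : lam i' ≤ μ i := H i i' rfl
      omega
    apply div_ne_zero
    · rw [Finset.prod_ne_zero_iff]
      intro k _
      have hpos : (0 : ℤ) < hh i j - (ν j : ℤ) + (k : ℤ) := by
        have := hhdef i j
        have := hν j
        omega
      have : (0 : ℚ) < (hh i j : ℚ) - ((ν j : ℕ) : ℚ) + ((k : ℕ) : ℚ) := by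
        exact_mod_cast hpos
      exact ne_of_gt this
    · rw [Finset.prod_ne_zero_iff]
      intro k _
      exact ne_of_gt (hden i j hij k)
end

section
/- In the sl_2 ℏ-deformed Weyl algebra with generators x^1, x^2 over the field ℚ(h̊) (h̊ a transcendental parameter) subject to the relation x^1 ⋄ x^2 = ((h̊+1)/h̊) x^2 ⋄ x^1, one has for all natural numbers a, b: (x^1)^{⋄a} ⋄ (x^2)^{⋄b} = (x^2)^{⋄b} ⋄ (x^1)^{⋄a} · (h̊+1)^{↑a}/(h̊−b+1)^{↑a}, where the element h̊ satisfies the commutation rules h̊ x^1 = x^1 (h̊+1) and h̊ x^2 = x^2 (h̊−1). -/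
/-- Auxiliary: `X + n ≠ 0` in `RatFunc ℚ` for any integer `n`. -/
lemma hWeyl_X_add_int_ne_zero (n : ℤ) : (RatFunc.X : RatFunc ℚ) + n ≠ 0 := by
  have hc : ((n : Polynomial ℚ)).coeff 1 = 0 := by
    rw [← Polynomial.C_eq_intCast, Polynomial.coeff_C]; simp
  have hp : (Polynomial.X + (n : Polynomial ℚ)) ≠ 0 := by
    intro h
    have h2 := congrArg (fun p => Polynomial.coeff p 1) h
    simp [hc] at h2
  have := RatFunc.algebraMap_ne_zero hp
  simpa using this

/-- in the `sl_2` ℏ-deformed Weyl algebra over `ℚ(h̊)` with the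
relation `x¹ ⋄ x² = ((h̊+1)/h̊) x² ⋄ x¹` and commutation rules
`h̊ x¹ = x¹(h̊+1)`, `h̊ x² = x²(h̊−1)` (i.e. `f(h̊) xⁱ = xⁱ f(h̊ ± 1)` via the
shift automorphisms `σ, τ`), one has for all `a b : ℕ`:
`(x¹)^{⋄a} ⋄ (x²)^{⋄b} = (x²)^{⋄b} ⋄ (x¹)^{⋄a} · (h̊+1)^{↑a}/(h̊−b+1)^{↑a}`. -/
theorem hWeyl_comrelx (A : Type*) [Ring A] (ι : RatFunc ℚ →+* A)
    (σ τ : RatFunc ℚ →+* RatFunc ℚ)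
    (hσ : σ RatFunc.X = RatFunc.X + 1)
    (hτ : τ RatFunc.X = RatFunc.X - 1)
    (hστ : ∀ f, σ (τ f) = f) (hτσ : ∀ f, τ (σ f) = f)
    (x1 x2 : A)
    (h1 : ∀ f, ι f * x1 = x1 * ι (σ f))
    (h2 : ∀ f, ι f * x2 = x2 * ι (τ f))
    (hrel : x1 * x2 = ι ((RatFunc.X + 1) / RatFunc.X) * (x2 * x1)) :
    ∀ a b : ℕ,
      x1 ^ a * x2 ^ b = x2 ^ b * x1 ^ a *
        ι ((∏ k ∈ Finset.range a, (RatFunc.X + 1 + (k : RatFunc ℚ))) /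
           (∏ k ∈ Finset.range a, (RatFunc.X - (b : RatFunc ℚ) + 1 + (k : RatFunc ℚ)))) := by
  have nz := hWeyl_X_add_int_ne_zero
  -- iterated shifts applied to X
  have sX : ∀ a : ℕ, (σ ^ a) RatFunc.X = RatFunc.X + (a : RatFunc ℚ) := by
    intro a; induction a with
    | zero => simp
    | succ n ih =>
      rw [pow_succ', RingHom.mul_def, RingHom.comp_apply, ih, map_add, map_natCast, hσ]
      push_cast; ring
  have tX : ∀ b : ℕ, (τ ^ b) RatFunc.X = RatFunc.X - (b : RatFunc ℚ) := by
    intro b; induction b with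
    | zero => simp
    | succ n ih =>
      rw [pow_succ', RingHom.mul_def, RingHom.comp_apply, ih, map_sub, map_natCast, hτ]
      push_cast; ring
  -- commuting ι past powers of x1
  have k1 : ∀ (a : ℕ) (f), ι f * x1 ^ a = x1 ^ a * ι ((σ ^ a) f) := by
    intro a; induction a with
    | zero => simp
    | succ n ih =>
      intro f
      rw [pow_succ', ← mul_assoc, h1, mul_assoc, ih (σ f), ← mul_assoc, ← pow_succ']
      congr 2
  -- commuting ι past powers of x2
  have k2 : ∀ (b : ℕ) (f), ι f * x2 ^ b = x2 ^ b * ι ((τ ^ b) f) := by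
    intro b; induction b with
    | zero => simp
    | succ n ih =>
      intro f
      rw [pow_succ', ← mul_assoc, h2, mul_assoc, ih (τ f), ← mul_assoc, ← pow_succ']
      congr 2
  -- ι commutes with the pair x2 * x1
  have pair : ∀ f, ι f * (x2 * x1) = x2 * x1 * ι f := by
    intro f
    rw [← mul_assoc, h2, mul_assoc, h1, hστ, ← mul_assoc]
  -- moving a single x1 past x2^b
  have L : ∀ b : ℕ, x1 * x2 ^ b
      = x2 ^ b * x1 * ι ((RatFunc.X + 1) / (RatFunc.X - (b : RatFunc ℚ) + 1)) := by
    intro b; induction b with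
    | zero =>
      have e0 : (RatFunc.X : RatFunc ℚ) + 1 ≠ 0 := fun h =>
        nz 1 (by push_cast; linear_combination h)
      simp [div_self e0]
    | succ n ih =>
      have e1 : (RatFunc.X : RatFunc ℚ) - (n : RatFunc ℚ) + 1 ≠ 0 := fun h =>
        nz (1 - (n : ℤ)) (by push_cast; linear_combination h)
      have e2 : (RatFunc.X : RatFunc ℚ) - (n : RatFunc ℚ) ≠ 0 := fun h =>
        nz (-(n : ℤ)) (by push_cast; linear_combination h)
      rw [pow_succ', ← mul_assoc, hrel, pair, mul_assoc, k2 n _, ← mul_assoc,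
        mul_assoc x2 x1 (x2 ^ n), ih]
      simp only [← mul_assoc]
      rw [← pow_succ', mul_assoc _ (ι _) (ι _), ← map_mul]
      congr 2
      rw [map_div₀, map_add, map_one, tX n]
      push_cast
      rw [div_mul_div_comm,
        show RatFunc.X - ((n : RatFunc ℚ) + 1) + 1 = RatFunc.X - (n : RatFunc ℚ) by ring,
        mul_comm (RatFunc.X + 1) (RatFunc.X - (n : RatFunc ℚ) + 1),
        mul_div_mul_left _ _ e1]
  -- main induction on a
  intro a b
  induction a with
  | zero => simp
  | succ n ih =>
    have hσS : (σ ^ n) ((RatFunc.X + 1) / (RatFunc.X - (b : RatFunc ℚ) + 1))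
        = (RatFunc.X + (n : RatFunc ℚ) + 1) /
          (RatFunc.X + (n : RatFunc ℚ) - (b : RatFunc ℚ) + 1) := by
      rw [map_div₀, map_add, map_one, map_add, map_sub, map_one, map_natCast, sX n]
    rw [pow_succ', mul_assoc, ih, ← mul_assoc, ← mul_assoc, mul_assoc x1 (x2 ^ b) (x1 ^ n)]
    rw [← mul_assoc x1 (x2 ^ b), L b]
    rw [mul_assoc _ (ι _) (x1 ^ n), k1 n _, hσS]
    simp only [← mul_assoc]
    rw [mul_assoc _ (ι _) (ι _), ← map_mul]
    congr 2
    rw [div_mul_div_comm, Finset.prod_range_succ, Finset.prod_range_succ]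
    congr 1 <;> ring
end

section
/- With the same ℏ-deformed sl_2 Weyl algebra conventions (x^1 x^2 = ((h̊+1)/h̊) x^2 x^1, and x^i f(h̊) = f(h̊+w_i) x^i with w_1 = 1, w_2 = −1), define the algebra map q̌ on generators by q̌(x^1) = x^2 · h̊/(h̊−1), q̌(x^2) = x^1, q̌(f(h̊)) = f(−h̊) for rational functions f. Then for all natural numbers a, b: q̌((x^2)^{⋄a} ⋄ (x^1)^{⋄b}) = (x^2)^{⋄b} ⋄ (x^1)^{⋄a} · h̊^{↑(a+1)}/(h̊−b)^{↑(a+1)}. -/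
/-- in the `sl_2` ℏ-deformed Weyl algebra, the Zhelobenko
automorphism `q̌` (an algebra map with `q̌(x¹) = x²·h̊/(h̊−1)`, `q̌(x²) = x¹`,
`q̌(f(h̊)) = f(−h̊)`) satisfies, for all `a b : ℕ`:
`q̌((x²)^{⋄a} ⋄ (x¹)^{⋄b}) = (x²)^{⋄b} ⋄ (x¹)^{⋄a} · h̊^{↑(a+1)}/(h̊−b)^{↑(a+1)}`. -/
theorem hWeyl_zhelobenko_action (A : Type*) [Ring A] (ι : RatFunc ℚ →+* A)
    (σ τ neg : RatFunc ℚ →+* RatFunc ℚ)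
    (hσ : σ RatFunc.X = RatFunc.X + 1)
    (hτ : τ RatFunc.X = RatFunc.X - 1)
    (hneg : neg RatFunc.X = -RatFunc.X)
    (hστ : ∀ f, σ (τ f) = f) (hτσ : ∀ f, τ (σ f) = f)
    (x1 x2 : A)
    (h1 : ∀ f, ι f * x1 = x1 * ι (σ f))
    (h2 : ∀ f, ι f * x2 = x2 * ι (τ f))
    (hrel : x1 * x2 = ι ((RatFunc.X + 1) / RatFunc.X) * (x2 * x1))
    (Q : A →+* A)
    (hQι : ∀ f, Q (ι f) = ι (neg f))
    (hQ1 : Q x1 = x2 * ι (RatFunc.X / (RatFunc.X - 1)))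
    (hQ2 : Q x2 = x1) :
    ∀ a b : ℕ,
      Q (x2 ^ a * x1 ^ b) = x2 ^ b * x1 ^ a *
        ι ((∏ k ∈ Finset.range (a + 1), (RatFunc.X + (k : RatFunc ℚ))) /
           (∏ k ∈ Finset.range (a + 1),
              (RatFunc.X - (b : RatFunc ℚ) + (k : RatFunc ℚ)))) := by
  haveI : CharZero (RatFunc ℚ) := charZero_of_injective_algebraMap (RatFunc.algebraMap_injective ℚ)
  -- nonzeroness of linear polynomials
  have hnz : ∀ c : ℚ, RatFunc.X + (c : RatFunc ℚ) ≠ 0 := by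
    intro c
    have hp : (Polynomial.X + Polynomial.C c : Polynomial ℚ) ≠ 0 :=
      Polynomial.X_add_C_ne_zero c
    have he : (algebraMap (Polynomial ℚ) (RatFunc ℚ)) (Polynomial.X + Polynomial.C c)
        = RatFunc.X + (c : RatFunc ℚ) := by
      rw [map_add, RatFunc.algebraMap_X, RatFunc.algebraMap_C, eq_ratCast]
    rw [← he]
    exact RatFunc.algebraMap_ne_zero hp
  have key : ∀ y : RatFunc ℚ, (∃ c : ℚ, y = RatFunc.X + (c : RatFunc ℚ)) → y ≠ 0 := by
    rintro y ⟨c, rfl⟩; exact hnz c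
  have hXne : (RatFunc.X : RatFunc ℚ) ≠ 0 := RatFunc.X_ne_zero
  -- σ and τ on linear fractions
  have hσq : ∀ c d : ℚ, σ ((RatFunc.X + (c : RatFunc ℚ)) / (RatFunc.X + (d : RatFunc ℚ)))
      = (RatFunc.X + ((c + 1 : ℚ) : RatFunc ℚ)) / (RatFunc.X + ((d + 1 : ℚ) : RatFunc ℚ)) := by
    intro c d
    rw [map_div₀, map_add, map_add, hσ, map_ratCast, map_ratCast]
    push_cast; ring
  have hτq : ∀ c d : ℚ, τ ((RatFunc.X + (c : RatFunc ℚ)) / (RatFunc.X + (d : RatFunc ℚ)))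
      = (RatFunc.X + ((c - 1 : ℚ) : RatFunc ℚ)) / (RatFunc.X + ((d - 1 : ℚ) : RatFunc ℚ)) := by
    intro c d
    rw [map_div₀, map_add, map_add, hτ, map_ratCast, map_ratCast]
    push_cast; ring
  have hι2 : ∀ f, x2 * ι f = ι (σ f) * x2 := by
    intro f; rw [h2 (σ f), hτσ]
  -- commuting linear fractions through powers of x1
  have hC1 : ∀ (n : ℕ) (c d : ℚ),
      ι ((RatFunc.X + (c : RatFunc ℚ)) / (RatFunc.X + (d : RatFunc ℚ))) * x1 ^ n
      = x1 ^ n * ι ((RatFunc.X + ((c + n : ℚ) : RatFunc ℚ)) /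
          (RatFunc.X + ((d + n : ℚ) : RatFunc ℚ))) := by
    intro n
    induction n with
    | zero => intro c d; simp
    | succ n IH =>
      intro c d
      rw [pow_succ', ← mul_assoc, h1, hσq, mul_assoc, IH, ← mul_assoc, ← pow_succ']
      congr 3 <;> push_cast <;> ring
  -- commuting linear fractions through powers of x2 (rightwards)
  have hC2 : ∀ (n : ℕ) (c d : ℚ),
      ι ((RatFunc.X + (c : RatFunc ℚ)) / (RatFunc.X + (d : RatFunc ℚ))) * x2 ^ n
      = x2 ^ n * ι ((RatFunc.X + ((c - n : ℚ) : RatFunc ℚ)) /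
          (RatFunc.X + ((d - n : ℚ) : RatFunc ℚ))) := by
    intro n
    induction n with
    | zero => intro c d; simp
    | succ n IH =>
      intro c d
      rw [pow_succ', ← mul_assoc, h2, hτq, mul_assoc, IH, ← mul_assoc, ← pow_succ']
      congr 3 <;> push_cast <;> ring
  -- commuting linear fractions through powers of x2 (leftwards)
  have hC2' : ∀ (n : ℕ) (c d : ℚ),
      x2 ^ n * ι ((RatFunc.X + (c : RatFunc ℚ)) / (RatFunc.X + (d : RatFunc ℚ)))
      = ι ((RatFunc.X + ((c + n : ℚ) : RatFunc ℚ)) /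
          (RatFunc.X + ((d + n : ℚ) : RatFunc ℚ))) * x2 ^ n := by
    intro n
    induction n with
    | zero => intro c d; simp
    | succ n IH =>
      intro c d
      rw [pow_succ, mul_assoc, hι2, hσq, ← mul_assoc, IH, mul_assoc, ← pow_succ]
      congr 3 <;> push_cast <;> ring
  -- L1 : powers of Q x1
  have L1 : ∀ m : ℕ, (x2 * ι (RatFunc.X / (RatFunc.X - 1))) ^ m
      = x2 ^ m * ι (RatFunc.X / (RatFunc.X - ((m : ℚ) : RatFunc ℚ))) := by
    intro m
    induction m with
    | zero => simp [div_self hXne]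
    | succ m IH =>
      have hτm : τ (RatFunc.X / (RatFunc.X - ((m : ℚ) : RatFunc ℚ)))
          = (RatFunc.X - 1) / (RatFunc.X - 1 - ((m : ℚ) : RatFunc ℚ)) := by
        rw [map_div₀, map_sub, hτ, map_ratCast]
      have hs : (RatFunc.X - 1) / (RatFunc.X - 1 - ((m : ℚ) : RatFunc ℚ))
          * (RatFunc.X / (RatFunc.X - 1))
          = RatFunc.X / (RatFunc.X - (((m + 1 : ℕ) : ℚ) : RatFunc ℚ)) := by
        have d1 : (RatFunc.X - 1 - ((m : ℚ) : RatFunc ℚ)) ≠ 0 :=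
          key _ ⟨-1 - m, by push_cast; ring⟩
        have d2 : (RatFunc.X - (1 : RatFunc ℚ)) ≠ 0 := key _ ⟨-1, by push_cast; ring⟩
        have d3 : (RatFunc.X - (((m + 1 : ℕ) : ℚ) : RatFunc ℚ)) ≠ 0 :=
          key _ ⟨-(m + 1), by push_cast; ring⟩
        rw [div_mul_div_comm, div_eq_div_iff (mul_ne_zero d1 d2) d3]
        push_cast; ring
      rw [pow_succ, IH, mul_assoc, ← mul_assoc (ι _), h2, hτm, mul_assoc, ← map_mul, hs,
        ← mul_assoc, ← pow_succ]
  -- L3 : x1 past powers of x2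
  have L3 : ∀ m : ℕ, x1 * x2 ^ m
      = ι ((RatFunc.X + ((m : ℚ) : RatFunc ℚ)) / RatFunc.X) * (x2 ^ m * x1) := by
    intro m
    induction m with
    | zero => simp [div_self hXne]
    | succ m IH =>
      have hg : ((RatFunc.X + 1) / RatFunc.X : RatFunc ℚ)
          = (RatFunc.X + ((1 : ℚ) : RatFunc ℚ)) / (RatFunc.X + ((0 : ℚ) : RatFunc ℚ)) := by
        push_cast; ring
      have hs : ((RatFunc.X + ((m : ℚ) : RatFunc ℚ)) / RatFunc.X)
          * ((RatFunc.X + ((1 + (m : ℚ) : ℚ) : RatFunc ℚ)) /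
              (RatFunc.X + ((0 + (m : ℚ) : ℚ) : RatFunc ℚ)))
          = (RatFunc.X + (((m + 1 : ℕ) : ℚ) : RatFunc ℚ)) / RatFunc.X := by
        have d1 : (RatFunc.X + ((0 + (m : ℚ) : ℚ) : RatFunc ℚ)) ≠ 0 := hnz _
        rw [div_mul_div_comm, div_eq_div_iff (mul_ne_zero hXne d1) hXne]
        push_cast; ring
      rw [pow_succ, ← mul_assoc, IH, mul_assoc, mul_assoc, hrel, ← mul_assoc (x2 ^ m), hg,
        hC2' m 1 0]
      simp only [← mul_assoc]
      rw [← map_mul, hs]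
  -- main proof
  intro a b
  induction a with
  | zero =>
    rw [pow_zero, one_mul, map_pow, hQ1, L1 b, pow_zero, mul_one]
    congr 2
    rw [Finset.prod_range_one, Finset.prod_range_one]
    push_cast; ring
  | succ a IH =>
    have step1 : Q (x2 ^ (a + 1) * x1 ^ b) = x1 * (x2 ^ b * x1 ^ a *
        ι ((∏ k ∈ Finset.range (a + 1), (RatFunc.X + (k : RatFunc ℚ))) /
           (∏ k ∈ Finset.range (a + 1),
              (RatFunc.X - (b : RatFunc ℚ) + (k : RatFunc ℚ))))) := by
      rw [pow_succ', mul_assoc, map_mul, hQ2, IH]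
    rw [step1]
    set N := ∏ k ∈ Finset.range (a + 1), (RatFunc.X + (k : RatFunc ℚ)) with hN
    set D := ∏ k ∈ Finset.range (a + 1),
        (RatFunc.X - (b : RatFunc ℚ) + (k : RatFunc ℚ)) with hD
    have hb : ((RatFunc.X + ((b : ℚ) : RatFunc ℚ)) / RatFunc.X : RatFunc ℚ)
        = (RatFunc.X + ((b : ℚ) : RatFunc ℚ)) / (RatFunc.X + ((0 : ℚ) : RatFunc ℚ)) := by
      push_cast; ring
    calc x1 * (x2 ^ b * x1 ^ a * ι (N / D))
        = (x1 * x2 ^ b) * (x1 ^ a * ι (N / D)) := by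
          simp only [mul_assoc]
      _ = ι ((RatFunc.X + ((b : ℚ) : RatFunc ℚ)) / RatFunc.X) *
            (x2 ^ b * (x1 ^ (a + 1) * ι (N / D))) := by
          rw [L3 b]
          simp only [mul_assoc]
          rw [← mul_assoc x1 (x1 ^ a), ← pow_succ']
      _ = x2 ^ b * (x1 ^ (a + 1) *
            (ι ((RatFunc.X + (((b : ℚ) - (b : ℚ) + ((a + 1 : ℕ) : ℚ) : ℚ) : RatFunc ℚ)) /
                (RatFunc.X + (((0 : ℚ) - (b : ℚ) + ((a + 1 : ℕ) : ℚ) : ℚ) : RatFunc ℚ))) * ι (N / D))) := by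
          rw [hb, ← mul_assoc, hC2 b b 0, mul_assoc, ← mul_assoc (ι _), hC1 (a + 1), mul_assoc]
      _ = x2 ^ b * x1 ^ (a + 1) *
            ι ((∏ k ∈ Finset.range (a + 1 + 1), (RatFunc.X + (k : RatFunc ℚ))) /
               (∏ k ∈ Finset.range (a + 1 + 1),
                  (RatFunc.X - (b : RatFunc ℚ) + (k : RatFunc ℚ)))) := by
          rw [Finset.prod_range_succ (fun k => RatFunc.X + (k : RatFunc ℚ)) (a + 1),
            Finset.prod_range_succ
              (fun k => RatFunc.X - (b : RatFunc ℚ) + (k : RatFunc ℚ)) (a + 1),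
            ← hN, ← hD, ← map_mul]
          simp only [mul_assoc]
          congr 3
          rw [div_mul_div_comm]
          congr 1 <;> push_cast <;> ring
end

section
/- Let ν, ν' ∈ {0,1}^n. In the ℏ-deformed Grassmann algebra, the diagonal values of the contravariant form on ordered monomials ζ^ν = (ζ^n)^{ν_n}⋯(ζ^1)^{ν_1} are κ_ν = ∏_{i<j} ((h̊_{ij} − ν_j)/h̊_{ij})^{1−ν_i}, and this expression satisfies the covariance identity: applying the substitution q̌_i (which exchanges h̊_i ↔ h̊_{i+1} in shifted form, i.e. maps h̊_{i,i+1} ↦ −h̊_{i,i+1} and permutes the other h̊_{kl} accordingly) gives q̌_i(κ_ν) = κ_{s_iν} · ((h̊_{i,i+1}+ν_{i+1})/h̊_{i,i+1})^{1−ν_i} · (h̊_{i,i+1}/(h̊_{i,i+1}−ν_i))^{1−ν_{i+1}}, where s_iν swaps ν_i and ν_{i+1}. -/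
noncomputable section

/-- The field `ℚ(h̊_1, …, h̊_n)` of rational functions. -/
abbrev HField (n : ℕ) := FractionRing (MvPolynomial (Fin n) ℚ)

/-- The generator `h̊_i` inside `ℚ(h̊_1, …, h̊_n)`. -/
def hgen (n : ℕ) (i : Fin n) : HField n :=
  algebraMap (MvPolynomial (Fin n) ℚ) (HField n) (MvPolynomial.X i)

/-- `κ_ν = ∏_{i<j} ((h̊_{ij} − ν_j)/h̊_{ij})^{1−ν_i}`, computed with a given choice
of the variables `h`. -/
def kappaNu (n : ℕ) (h : Fin n → HField n) (ν : Fin n → ℕ) : HField n :=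
  ∏ p ∈ Finset.univ.filter (fun p : Fin n × Fin n => p.1 < p.2),
    ((h p.1 - h p.2 - (ν p.2 : HField n)) / (h p.1 - h p.2)) ^ (1 - ν p.1)

lemma hgen_sub_ne (n : ℕ) (i j : Fin n) (hne : i ≠ j) (c : ℕ) :
    hgen n i - hgen n j - (c : HField n) ≠ 0 := by
  have h1 : hgen n i - hgen n j - (c : HField n) =
      algebraMap (MvPolynomial (Fin n) ℚ) (HField n)
        (MvPolynomial.X i - MvPolynomial.X j - (c : MvPolynomial (Fin n) ℚ)) := by
    simp [hgen, map_sub, map_natCast]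
  rw [h1]
  rw [map_ne_zero_iff _ (IsFractionRing.injective (MvPolynomial (Fin n) ℚ) (HField n))]
  intro h
  have := congrArg (MvPolynomial.eval (fun k => if k = i then (c : ℚ) + 1 else 0)) h
  simp only [map_sub, MvPolynomial.eval_X, map_natCast, map_zero] at this
  simp [hne.symm] at this

lemma swap_lt {n : ℕ} (i j : Fin n) (hij : (j : ℕ) = (i : ℕ) + 1)
    (a b : Fin n) (h : a < b) (hne : (a, b) ≠ (i, j)) :
    Equiv.swap i j a < Equiv.swap i j b := by
  have hne' : ¬((a : ℕ) = i ∧ (b : ℕ) = j) := by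
    intro ⟨h1, h2⟩
    exact hne (by simp [Prod.ext_iff, Fin.ext_iff, h1, h2])
  simp only [Equiv.swap_apply_def]
  split_ifs <;> simp only [Fin.ext_iff, Fin.lt_def] at * <;> omega

/-- for `ν ∈ {0,1}^n` the diagonal values `κ_ν` of the contravariant
form on the ℏ-Grassmann algebra satisfy the covariance identity
`q̌_i(κ_ν) = κ_{s_iν} · ((h̊_{i,i+1}+ν_{i+1})/h̊_{i,i+1})^{1−ν_i} ·
(h̊_{i,i+1}/(h̊_{i,i+1}−ν_i))^{1−ν_{i+1}}`, where `q̌_i` acts by the substitution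
swapping `h̊_i ↔ h̊_{i+1}` and `s_iν` swaps `ν_i, ν_{i+1}`. -/
theorem kappa_covariance (n : ℕ) (ν : Fin n → ℕ) (hν : ∀ i, ν i ≤ 1)
    (i j : Fin n) (hij : (j : ℕ) = (i : ℕ) + 1) :
    kappaNu n (hgen n ∘ (Equiv.swap i j)) ν =
      kappaNu n (hgen n) (ν ∘ (Equiv.swap i j)) *
        ((hgen n i - hgen n j + (ν j : HField n)) / (hgen n i - hgen n j)) ^ (1 - ν i) *
        ((hgen n i - hgen n j) / (hgen n i - hgen n j - (ν i : HField n))) ^ (1 - ν j) := by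
  set σ := Equiv.swap i j with hσ
  have hlt : i < j := by simp [Fin.lt_def, hij]
  have hne : i ≠ j := ne_of_lt hlt
  have hD : hgen n i - hgen n j ≠ 0 := by
    have := hgen_sub_ne n i j hne 0
    simpa using this
  have hDa : hgen n i - hgen n j - (ν i : HField n) ≠ 0 := hgen_sub_ne n i j hne (ν i)
  have hmem : (i, j) ∈ Finset.univ.filter (fun p : Fin n × Fin n => p.1 < p.2) := by
    simp [hlt]
  unfold kappaNu
  rw [← Finset.mul_prod_erase _ _ hmem, ← Finset.mul_prod_erase _ _ hmem]
  have hP : (∏ p ∈ (Finset.univ.filter (fun p : Fin n × Fin n => p.1 < p.2)).erase (i, j),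
        (((hgen n ∘ σ) p.1 - (hgen n ∘ σ) p.2 - (ν p.2 : HField n)) /
          ((hgen n ∘ σ) p.1 - (hgen n ∘ σ) p.2)) ^ (1 - ν p.1)) =
      ∏ p ∈ (Finset.univ.filter (fun p : Fin n × Fin n => p.1 < p.2)).erase (i, j),
        ((hgen n p.1 - hgen n p.2 - ((ν ∘ σ) p.2 : HField n)) /
          (hgen n p.1 - hgen n p.2)) ^ (1 - (ν ∘ σ) p.1) := by
    refine Finset.prod_nbij' (fun p => (σ p.1, σ p.2)) (fun p => (σ p.1, σ p.2))
      ?_ ?_ ?_ ?_ ?_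
    · rintro ⟨a, b⟩ hab
      simp only [Finset.mem_erase, Finset.mem_filter, Finset.mem_univ, true_and] at hab ⊢
      obtain ⟨hab1, hab2⟩ := hab
      refine ⟨?_, swap_lt i j hij a b hab2 hab1⟩
      intro hc
      rw [Prod.ext_iff] at hc
      have ha : a = j := by
        have := congrArg σ hc.1
        simpa [hσ, Equiv.swap_apply_self, Equiv.swap_apply_left] using this
      have hb : b = i := by
        have := congrArg σ hc.2
        simpa [hσ, Equiv.swap_apply_self, Equiv.swap_apply_right] using this
      rw [ha, hb] at hab2
      exact absurd hab2 (not_lt.mpr (le_of_lt hlt))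
    · rintro ⟨a, b⟩ hab
      simp only [Finset.mem_erase, Finset.mem_filter, Finset.mem_univ, true_and] at hab ⊢
      obtain ⟨hab1, hab2⟩ := hab
      refine ⟨?_, swap_lt i j hij a b hab2 hab1⟩
      intro hc
      rw [Prod.ext_iff] at hc
      have ha : a = j := by
        have := congrArg σ hc.1
        simpa [hσ, Equiv.swap_apply_self, Equiv.swap_apply_left] using this
      have hb : b = i := by
        have := congrArg σ hc.2
        simpa [hσ, Equiv.swap_apply_self, Equiv.swap_apply_right] using this
      rw [ha, hb] at hab2
      exact absurd hab2 (not_lt.mpr (le_of_lt hlt))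
    · rintro ⟨a, b⟩ _; simp [hσ, Equiv.swap_apply_self]
    · rintro ⟨a, b⟩ _; simp [hσ, Equiv.swap_apply_self]
    · rintro ⟨a, b⟩ _
      simp [Function.comp, hσ, Equiv.swap_apply_self]
  rw [hP]
  -- now handle the special factors
  have hσi : σ i = j := Equiv.swap_apply_left i j
  have hσj : σ j = i := Equiv.swap_apply_right i j
  simp only [Function.comp_apply, hσi, hσj]
  have key : ((hgen n j - hgen n i - (ν j : HField n)) / (hgen n j - hgen n i)) ^ (1 - ν i) =
      ((hgen n i - hgen n j + (ν j : HField n)) / (hgen n i - hgen n j)) ^ (1 - ν i) := by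
    rw [show hgen n j - hgen n i - (ν j : HField n)
        = -(hgen n i - hgen n j + (ν j : HField n)) by ring,
      show hgen n j - hgen n i = -(hgen n i - hgen n j) by ring, neg_div_neg_eq]
  have cancel : ((hgen n i - hgen n j - (ν i : HField n)) / (hgen n i - hgen n j)) ^ (1 - ν j) *
      ((hgen n i - hgen n j) / (hgen n i - hgen n j - (ν i : HField n))) ^ (1 - ν j) = 1 := by
    have h1 : ((hgen n i - hgen n j - (ν i : HField n)) / (hgen n i - hgen n j)) *
        ((hgen n i - hgen n j) / (hgen n i - hgen n j - (ν i : HField n))) = 1 := by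
      field_simp
    rw [← mul_pow, h1, one_pow]
  rw [key]
  set P := ∏ p ∈ (Finset.univ.filter (fun p : Fin n × Fin n => p.1 < p.2)).erase (i, j),
      ((hgen n p.1 - hgen n p.2 - ((ν ∘ σ) p.2 : HField n)) /
        (hgen n p.1 - hgen n p.2)) ^ (1 - (ν ∘ σ) p.1) with hPdef
  set A := ((hgen n i - hgen n j + (ν j : HField n)) / (hgen n i - hgen n j)) ^ (1 - ν i)
  set B := ((hgen n i - hgen n j) / (hgen n i - hgen n j - (ν i : HField n))) ^ (1 - ν j)
  set C := ((hgen n i - hgen n j - (ν i : HField n)) / (hgen n i - hgen n j)) ^ (1 - ν j)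
  calc A * P = P * A * (C * B) := by rw [cancel]; ring
    _ = C * P * A * B := by ring
end
end
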